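/- Let a, b, p > 0, let B be Beta(a,b) and E an independent standard exponential. Then |P(B > 1 − E/(pw)) − P(B > (1 + E/w)^{-1/p})| = o(w^{-b}) as w → ∞. -/

import Mathlib

open MeasureTheory Filter Real Asymptotics
open Set NNReal ENNReal

/-- The Beta(a,b) distribution on ℝ, via its density. -/
noncomputable def betaM (a b : ℝ) : Measure ℝ :=
  volume.withDensity fun x => ENNReal.ofReal
    (if 0 < x ∧ x < 1 then
      x ^ (a - 1) * (1 - x) ^ (b - 1) * (Real.Gamma (a + b) / (Real.Gamma a * Real.Gamma b))
    else 0)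

/-- The generalized gamma GG(c,p) distribution on ℝ, via its density. -/
noncomputable def genGammaM (c p : ℝ) : Measure ℝ :=
  volume.withDensity fun x => ENNReal.ofReal
    (if 0 < x then p / Real.Gamma (c / p) * x ^ (c - 1) * Real.exp (-(x ^ p)) else 0)

/-- The Gamma(r,1) distribution on ℝ, via its density. -/
noncomputable def gammaM (r : ℝ) : Measure ℝ :=
  volume.withDensity fun x => ENNReal.ofReal
    (if 0 < x then x ^ (r - 1) * Real.exp (-x) / Real.Gamma r else 0)

/-- The standard exponential distribution on ℝ, via its density. -/
noncomputable def expM : Measure ℝ :=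
  volume.withDensity fun x => ENNReal.ofReal (if 0 < x then Real.exp (-x) else 0)


lemma bern_neg {q x : ℝ} (hq : 0 < q) (hx : 0 ≤ x) : 1 - q * x ≤ (1 + x) ^ (-q) := by
  have h1x : (0:ℝ) < 1 + x := by linarith
  rcases le_or_gt 1 q with hq1 | hq1
  · have hi : (0:ℝ) < (1+x)⁻¹ := inv_pos.2 h1x
    have hs : -1 ≤ (1 + x)⁻¹ - 1 := by linarith
    have hB := one_add_mul_self_le_rpow_one_add hs hq1
    have hrw : (1 + ((1 + x)⁻¹ - 1)) = (1+x)⁻¹ := by ring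
    rw [hrw, Real.inv_rpow h1x.le, ← Real.rpow_neg h1x.le] at hB
    have hmul : (1+x)⁻¹ * (1+x) = 1 := inv_mul_cancel₀ h1x.ne'
    nlinarith [hB, hmul, mul_nonneg (mul_nonneg hq.le hx) hx]
  · have hB := rpow_one_add_le_one_add_mul_self (by linarith : (-1:ℝ) ≤ x) hq.le hq1.le
    have hpos : (0:ℝ) < (1+x) ^ q := Real.rpow_pos_of_pos h1x q
    have h2 : (1 - q*x) * ((1+x)^q) ≤ 1 := by
      rcases le_or_gt (1 - q*x) 0 with h | h
      · have := mul_nonpos_of_nonpos_of_nonneg h hpos.le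
        linarith
      · calc (1 - q*x) * ((1+x)^q) ≤ (1 - q*x) * (1 + q*x) := by
              exact mul_le_mul_of_nonneg_left hB h.le
          _ = 1 - (q*x)^2 := by ring
          _ ≤ 1 := by nlinarith
    rw [Real.rpow_neg h1x.le, inv_eq_one_div, le_div_iff₀ hpos]
    exact h2

/-- quantitative second-order bound -/
lemma bern_quad {q x : ℝ} (hq : 0 < q) (hx : 0 ≤ x) :
    (1 + x) ^ (-q) - (1 - q * x) ≤ q * (q + 1) * x ^ 2 := by
  set φ : ℝ → ℝ := fun t => (1 + t) ^ (-q) + q * t with hφ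
  have hderiv : ∀ t ∈ Icc (0:ℝ) x, HasDerivWithinAt φ
      (q - q * (1 + t) ^ (-q - 1)) (Icc 0 x) t := by
    intro t ht
    have h1t : (0:ℝ) < 1 + t := by have := ht.1; linarith
    have h1 : HasDerivAt (fun t : ℝ => (1 + t) ^ (-q)) (1 * (-q) * (1 + t) ^ (-q - 1)) t := by
      exact (((hasDerivAt_const t (1:ℝ)).add (hasDerivAt_id t)).congr_deriv (by simp)).rpow_const
        (Or.inl h1t.ne')
    have h2 : HasDerivAt φ (1 * (-q) * (1 + t) ^ (-q - 1) + q) t := by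
      exact (h1.add ((hasDerivAt_id t).const_mul q)).congr_deriv (by ring)
    have := h2.hasDerivWithinAt (s := Icc 0 x)
    exact this.congr_deriv (by ring)
  have hbound : ∀ t ∈ Icc (0:ℝ) x, ‖q - q * (1 + t) ^ (-q - 1)‖ ≤ q * (q + 1) * x := by
    intro t ht
    have h1t : (0:ℝ) < 1 + t := by have := ht.1; linarith
    have hle1 : (1 + t) ^ (-q - 1) ≤ 1 :=
      Real.rpow_le_one_of_one_le_of_nonpos (by linarith [ht.1]) (by linarith)
    have hge : 1 - (q + 1) * t ≤ (1 + t) ^ (-(q + 1)) := bern_neg (by linarith) ht.1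
    have hexp : -(q+1) = -q - 1 := by ring
    rw [hexp] at hge
    rw [Real.norm_eq_abs, abs_of_nonneg (by nlinarith)]
    have ht2 : t ≤ x := ht.2
    have hA := mul_le_mul_of_nonneg_left hge hq.le
    have hB2 := mul_le_mul_of_nonneg_left ht2
      (mul_nonneg hq.le (by linarith : (0:ℝ) ≤ q + 1))
    nlinarith [hA, hB2]
  have key := (convex_Icc (0:ℝ) x).norm_image_sub_le_of_norm_hasDerivWithin_le
    hderiv hbound (left_mem_Icc.2 hx) (right_mem_Icc.2 hx)
  have hφ0 : φ 0 = 1 := by simp [hφ]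
  rw [hφ0] at key
  have : φ x - 1 ≤ q * (q+1) * x * ‖x - 0‖ := (le_abs_self _).trans key
  rw [sub_zero, Real.norm_eq_abs, abs_of_nonneg hx] at this
  have : (1 + x) ^ (-q) + q * x - 1 ≤ q * (q+1) * x * x := this
  nlinarith

/-- difference of powers bound -/
lemma rpow_diff_bound {b u v : ℝ} (hb : 0 < b) (hv : 0 ≤ v) (hvu : v ≤ u) :
    u ^ b - v ^ b ≤ (max b 1) * u ^ (b - min b 1) * (u - v) ^ (min b 1) := by
  have hu : 0 ≤ u := hv.trans hvu
  rcases le_or_gt b 1 with hb1 | hb1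
  · rw [min_eq_left hb1, max_eq_right hb1, sub_self, Real.rpow_zero, one_mul, one_mul]
    -- u^b ≤ v^b + (u-v)^b
    have hkey := NNReal.rpow_add_le_add_rpow (v.toNNReal) ((u-v).toNNReal) hb.le hb1
    have h1 : ((v.toNNReal + (u-v).toNNReal : ℝ≥0) : ℝ) = u := by
      push_cast
      rw [Real.coe_toNNReal _ hv, Real.coe_toNNReal _ (by linarith)]
      ring
    have hcoe := NNReal.coe_le_coe.2 hkey
    rw [NNReal.coe_rpow, h1, NNReal.coe_add, NNReal.coe_rpow, NNReal.coe_rpow,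
      Real.coe_toNNReal _ hv, Real.coe_toNNReal _ (by linarith : (0:ℝ) ≤ u - v)] at hcoe
    linarith
  · rw [min_eq_right hb1.le, max_eq_left hb1.le, Real.rpow_one]
    rcases eq_or_lt_of_le hu with h | hu0
    · have hv0 : v = 0 := le_antisymm (hvu.trans h.symm.le) hv
      rw [← h, hv0]
      simp [Real.zero_rpow hb.ne', Real.rpow_one]
    · set t := v / u with htdef
      have ht0 : 0 ≤ t := div_nonneg hv hu0.le
      have hB := one_add_mul_self_le_rpow_one_add (by linarith : (-1:ℝ) ≤ t - 1) hb1.le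
      rw [show (1 + (t - 1)) = t by ring] at hB
      have htv : u * t = v := by rw [htdef]; field_simp
      have hub : u ^ b = u ^ (b-1) * u := by
        rw [← Real.rpow_add_one hu0.ne' (b-1), sub_add_cancel]
      have hvb : v ^ b = u ^ b * t ^ b := by
        rw [← Real.mul_rpow hu0.le ht0, htv]
      have hupos : (0:ℝ) < u ^ b := Real.rpow_pos_of_pos hu0 b
      have h1 : u ^ b * (1 + b * (t - 1)) ≤ v ^ b := by
        rw [hvb]; exact mul_le_mul_of_nonneg_left hB hupos.le
      have h2 : u ^ b * (t - 1) = u ^ (b-1) * (v - u) := by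
        rw [hub, mul_assoc, mul_sub, htv, mul_one]
      nlinarith [h1, h2]

noncomputable def bden (a b : ℝ) : ℝ → ℝ≥0∞ := fun x => ENNReal.ofReal
    (if 0 < x ∧ x < 1 then
      x ^ (a - 1) * (1 - x) ^ (b - 1) * (Real.Gamma (a + b) / (Real.Gamma a * Real.Gamma b))
    else 0)

noncomputable def gden : ℝ → ℝ≥0∞ := fun x => ENNReal.ofReal (if 0 < x then Real.exp (-x) else 0)

lemma betaM_eq (a b : ℝ) : betaM a b = volume.withDensity (bden a b) := rfl
lemma expM_eq : expM = volume.withDensity gden := rfl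

lemma meas_bden (a b : ℝ) : Measurable (bden a b) := by
  apply ENNReal.measurable_ofReal.comp
  refine Measurable.ite ?_ ?_ measurable_const
  · exact (measurableSet_lt measurable_const measurable_id).inter
      (measurableSet_lt measurable_id measurable_const)
  · exact ((measurable_id.pow_const (a-1)).mul
      ((measurable_const.sub measurable_id).pow_const (b-1))).mul_const _

lemma meas_gden : Measurable gden := by
  apply ENNReal.measurable_ofReal.comp
  exact Measurable.ite measurableSet_Ioi (measurable_id.neg.exp) measurable_const

lemma bden_eq_indicator (a b : ℝ) :
    bden a b = (Ioo (0:ℝ) 1).indicator (fun x => ENNReal.ofReal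
      (x ^ (a - 1) * (1 - x) ^ (b - 1) * (Real.Gamma (a + b) / (Real.Gamma a * Real.Gamma b)))) := by
  funext x
  by_cases h : 0 < x ∧ x < 1
  · rw [bden, if_pos h, indicator_of_mem (mem_Ioo.2 h)]
  · rw [bden, if_neg h, indicator_of_notMem (fun hc => h (mem_Ioo.1 hc)), ENNReal.ofReal_zero]

lemma gden_eq_indicator :
    gden = (Ioi (0:ℝ)).indicator (fun x => ENNReal.ofReal (Real.exp (-x))) := by
  funext x
  by_cases h : 0 < x
  · rw [gden, if_pos h, indicator_of_mem (mem_Ioi.2 h)]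
  · rw [gden, if_neg h, indicator_of_notMem (fun hc => h (mem_Ioi.1 hc)), ENNReal.ofReal_zero]

lemma rpow_le_max {c x : ℝ} (hx1 : 2⁻¹ ≤ x) (hx2 : x ≤ 1) :
    x ^ c ≤ max 1 ((2⁻¹:ℝ) ^ c) := by
  rcases le_or_gt 0 c with h | h
  · exact le_max_of_le_left (Real.rpow_le_one (by linarith) hx2 h)
  · exact le_max_of_le_right (Real.rpow_le_rpow_of_nonpos (by norm_num) hx1 h.le)

lemma integrable_sub_rpow {c : ℝ} (hc : -1 < c) (l r : ℝ) (h : l ≤ r) (hr : r ≤ 1) :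
    IntegrableOn (fun x : ℝ => (1 - x) ^ c) (Ioc l r) := by
  have h1 : IntervalIntegrable (fun x : ℝ => x ^ c) volume (1 - l) (1 - r) :=
    intervalIntegral.intervalIntegrable_rpow' hc
  have h2 := h1.comp_sub_left 1
  simp only [_root_.sub_sub_cancel] at h2
  exact (intervalIntegrable_iff_integrableOn_Ioc_of_le h).mp h2

lemma beta_int (a b : ℝ) (ha : 0 < a) (hb : 0 < b) :
    IntegrableOn (fun x : ℝ => x ^ (a-1) * (1-x) ^ (b-1)) (Ioo 0 1) := by
  have hsub : Ioo (0:ℝ) 1 ⊆ Ioc 0 2⁻¹ ∪ Ico 2⁻¹ 1 := by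
    intro x hx
    rcases le_or_gt x 2⁻¹ with h | h
    · exact Or.inl ⟨hx.1, h⟩
    · exact Or.inr ⟨h.le, hx.2⟩
  refine IntegrableOn.mono_set ?_ hsub
  have hmeas : AEStronglyMeasurable (fun x : ℝ => x ^ (a-1) * (1-x) ^ (b-1)) volume :=
    ((measurable_id.pow_const (a-1)).mul
      ((measurable_const.sub measurable_id).pow_const (b-1))).aestronglyMeasurable
  rw [integrableOn_union]
  constructor
  · have hg : IntegrableOn (fun x : ℝ => max 1 ((2⁻¹:ℝ) ^ (b-1)) * x ^ (a-1)) (Ioc 0 2⁻¹) := by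
      refine Integrable.const_mul ?_ _
      exact (intervalIntegrable_iff_integrableOn_Ioc_of_le (by norm_num)).mp
        (intervalIntegral.intervalIntegrable_rpow' (by linarith))
    refine Integrable.mono' hg hmeas.restrict ?_
    refine (ae_restrict_iff' measurableSet_Ioc).2 (ae_of_all _ fun x hx => ?_)
    have hx0 : 0 < x := hx.1
    have hx1 : x ≤ 2⁻¹ := hx.2
    have h1x : (1:ℝ) - x ≥ 2⁻¹ := by linarith
    rw [Real.norm_eq_abs, abs_of_nonneg (mul_nonneg (Real.rpow_nonneg hx0.le _)
      (Real.rpow_nonneg (by linarith) _))]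
    calc x ^ (a-1) * (1-x) ^ (b-1) ≤ x ^ (a-1) * max 1 ((2⁻¹:ℝ) ^ (b-1)) :=
          mul_le_mul_of_nonneg_left (rpow_le_max h1x (by linarith)) (Real.rpow_nonneg hx0.le _)
      _ = max 1 ((2⁻¹:ℝ) ^ (b-1)) * x ^ (a-1) := mul_comm _ _
  · have hg : IntegrableOn (fun x : ℝ => max 1 ((2⁻¹:ℝ) ^ (a-1)) * (1-x) ^ (b-1)) (Ico 2⁻¹ 1) := by
      refine Integrable.const_mul ?_ _
      show IntegrableOn _ _ _
      rw [← integrableOn_Icc_iff_integrableOn_Ico, integrableOn_Icc_iff_integrableOn_Ioc]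
      exact integrable_sub_rpow (by linarith) 2⁻¹ 1 (by norm_num) le_rfl
    refine Integrable.mono' hg hmeas.restrict ?_
    refine (ae_restrict_iff' measurableSet_Ico).2 (ae_of_all _ fun x hx => ?_)
    have hx0 : (2⁻¹:ℝ) ≤ x := hx.1
    have hx1 : x < 1 := hx.2
    rw [Real.norm_eq_abs, abs_of_nonneg (mul_nonneg (Real.rpow_nonneg (by linarith) _)
      (Real.rpow_nonneg (by linarith) _))]
    exact mul_le_mul_of_nonneg_right (rpow_le_max hx0 hx1.le) (Real.rpow_nonneg (by linarith) _)

lemma Gamma_frac_pos {a b : ℝ} (ha : 0 < a) (hb : 0 < b) :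
    0 < Real.Gamma (a + b) / (Real.Gamma a * Real.Gamma b) :=
  div_pos (Real.Gamma_pos_of_pos (by linarith))
    (mul_pos (Real.Gamma_pos_of_pos ha) (Real.Gamma_pos_of_pos hb))

lemma betaM_univ_lt_top (a b : ℝ) (ha : 0 < a) (hb : 0 < b) : betaM a b univ < ∞ := by
  rw [betaM_eq, withDensity_apply _ MeasurableSet.univ, Measure.restrict_univ,
    bden_eq_indicator, lintegral_indicator measurableSet_Ioo]
  have hInt : IntegrableOn (fun x : ℝ =>
      x ^ (a-1) * (1-x) ^ (b-1) * (Real.Gamma (a + b) / (Real.Gamma a * Real.Gamma b)))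
      (Ioo 0 1) := (beta_int a b ha hb).mul_const _
  exact hInt.lintegral_lt_top

lemma expM_univ : expM univ = 1 := by
  rw [expM_eq, withDensity_apply _ MeasurableSet.univ, Measure.restrict_univ,
    gden_eq_indicator, lintegral_indicator measurableSet_Ioi]
  have hInt : IntegrableOn (fun x : ℝ => Real.exp (-x)) (Ioi 0) := by
    have := exp_neg_integrableOn_Ioi 0 (one_pos)
    simpa using this
  rw [← ofReal_integral_eq_lintegral_ofReal hInt
    (ae_of_all _ fun x => (Real.exp_pos _).le), integral_exp_neg_Ioi_zero, ENNReal.ofReal_one]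

lemma expM_tail (T : ℝ) : ∫⁻ z in Ioi T, ENNReal.ofReal (Real.exp (-z)) =
    ENNReal.ofReal (Real.exp (-T)) := by
  have hInt : IntegrableOn (fun x : ℝ => Real.exp (-x)) (Ioi T) := by
    have := exp_neg_integrableOn_Ioi T (one_pos)
    simpa using this
  rw [← ofReal_integral_eq_lintegral_ofReal hInt
    (ae_of_all _ fun x => (Real.exp_pos _).le), integral_exp_neg_Ioi]

lemma betaM_compl (a b : ℝ) : betaM a b ((Ioo (0:ℝ) 1)ᶜ) = 0 := by
  rw [betaM_eq, withDensity_apply _ measurableSet_Ioo.compl, bden_eq_indicator]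
  have hm : Measurable ((Ioo (0:ℝ) 1).indicator (fun x => ENNReal.ofReal
      (x ^ (a - 1) * (1 - x) ^ (b - 1) * (Real.Gamma (a + b) / (Real.Gamma a * Real.Gamma b))))) := by
    refine Measurable.indicator ?_ measurableSet_Ioo
    exact ENNReal.measurable_ofReal.comp (((measurable_id.pow_const (a-1)).mul
      ((measurable_const.sub measurable_id).pow_const (b-1))).mul_const _)
  rw [lintegral_eq_zero_iff hm]
  refine (ae_restrict_iff' measurableSet_Ioo.compl).2 (ae_of_all _ fun x hx => ?_)
  exact indicator_of_notMem hx _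

lemma expM_Iic : expM (Iic (0:ℝ)) = 0 := by
  rw [expM_eq, withDensity_apply _ measurableSet_Iic, gden_eq_indicator]
  have hm : Measurable ((Ioi (0:ℝ)).indicator (fun x => ENNReal.ofReal (Real.exp (-x)))) :=
    Measurable.indicator (ENNReal.measurable_ofReal.comp (measurable_id.neg.exp))
      measurableSet_Ioi
  rw [lintegral_eq_zero_iff hm]
  refine (ae_restrict_iff' measurableSet_Iic).2 (ae_of_all _ fun x hx => ?_)
  exact indicator_of_notMem (by simpa using hx) _

/-- Bound on betaM of an interval `Ioc l r` near 1. -/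
lemma betaM_Ioc_le (a b : ℝ) (ha : 0 < a) (hb : 0 < b) {l r : ℝ}
    (hl : 2⁻¹ ≤ l) (hlr : l ≤ r) (hr : r ≤ 1) :
    betaM a b (Ioc l r) ≤ ENNReal.ofReal
      ((Real.Gamma (a + b) / (Real.Gamma a * Real.Gamma b)) * max 1 ((2⁻¹:ℝ) ^ (a-1)) / b *
        ((1-l) ^ b - (1-r) ^ b)) := by
  set C := Real.Gamma (a + b) / (Real.Gamma a * Real.Gamma b) with hC
  set Ka := max 1 ((2⁻¹:ℝ) ^ (a-1)) with hKa
  have hCpos : 0 < C := Gamma_frac_pos ha hb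
  have hKapos : (0:ℝ) < Ka := lt_of_lt_of_le one_pos (le_max_left _ _)
  rw [betaM_eq, withDensity_apply _ measurableSet_Ioc]
  have step1 : ∫⁻ x in Ioc l r, bden a b x ≤
      ∫⁻ x in Ioc l r, ENNReal.ofReal (C * Ka * (1-x) ^ (b-1)) := by
    refine setLIntegral_mono ?_ ?_
    · exact ENNReal.measurable_ofReal.comp
        (((measurable_const.sub measurable_id).pow_const (b-1)).const_mul _)
    · intro x hx
      have hx0 : (0:ℝ) < x := lt_of_lt_of_le (by norm_num) (hl.trans hx.1.le)
      rcases lt_or_ge x 1 with hx1 | hx1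
      · rw [bden, if_pos ⟨hx0, hx1⟩]
        refine ENNReal.ofReal_le_ofReal ?_
        have h1 : x ^ (a-1) ≤ Ka := rpow_le_max (hl.trans hx.1.le) hx1.le
        have h2 : (0:ℝ) ≤ (1-x) ^ (b-1) := Real.rpow_nonneg (by linarith) _
        calc x ^ (a-1) * (1-x) ^ (b-1) * C ≤ Ka * (1-x) ^ (b-1) * C := by
              exact mul_le_mul_of_nonneg_right (mul_le_mul_of_nonneg_right h1 h2) hCpos.le
          _ = C * Ka * (1-x) ^ (b-1) := by ring
      · have hx1' : x = 1 := le_antisymm (hx.2.trans hr) hx1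
        rw [bden, if_neg (by rw [hx1']; simp)]
        simp
  refine step1.trans ?_
  have hInt : IntegrableOn (fun x : ℝ => C * Ka * (1-x) ^ (b-1)) (Ioc l r) :=
    (integrable_sub_rpow (by linarith) l r hlr hr).const_mul _
  have hnn : 0 ≤ᵐ[volume.restrict (Ioc l r)] fun x : ℝ => C * Ka * (1-x) ^ (b-1) := by
    refine (ae_restrict_iff' measurableSet_Ioc).2 (ae_of_all _ fun x hx => ?_)
    exact mul_nonneg (mul_nonneg hCpos.le hKapos.le)
      (Real.rpow_nonneg (by linarith [hx.2.trans hr]) _)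
  rw [← ofReal_integral_eq_lintegral_ofReal hInt hnn]
  refine ENNReal.ofReal_le_ofReal ?_
  have hcomp : ∫ x in Ioc l r, C * Ka * (1-x) ^ (b-1) =
      C * Ka * ∫ x in Ioc l r, (1-x) ^ (b-1) := integral_const_mul _ _
  rw [hcomp]
  have hval : ∫ x in Ioc l r, (1-x) ^ (b-1) = ((1-l) ^ b - (1-r) ^ b) / b := by
    rw [← intervalIntegral.integral_of_le hlr]
    have := intervalIntegral.integral_comp_sub_left (a := l) (b := r)
      (fun t : ℝ => t ^ (b-1)) 1
    rw [this, integral_rpow (Or.inl (by linarith))]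
    rw [sub_add_cancel]
  rw [hval]
  rw [mul_div_assoc]
  ring_nf
  exact le_rfl

lemma sigmaFinite_betaM (a b : ℝ) : SigmaFinite (betaM a b) := by
  unfold betaM; infer_instance

lemma sigmaFinite_expM : SigmaFinite expM := by
  unfold expM; infer_instance

lemma main_bound (a b p : ℝ) (ha : 0 < a) (hb : 0 < b) (hp : 0 < p) :
    ∃ c : ℝ, 0 ≤ c ∧ ∀ w : ℝ, 0 < w →
      |(((betaM a b).prod expM) {q : ℝ × ℝ | q.1 > 1 - q.2 / (p * w)}).toReal -
        (((betaM a b).prod expM) {q : ℝ × ℝ | q.1 > (1 + q.2 / w) ^ (-(1 / p))}).toReal|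
      ≤ c * w ^ (-(b + min b 1)) + c * Real.exp (-(p/2) * w) := by
  haveI := sigmaFinite_betaM a b
  haveI := sigmaFinite_expM
  have hCpos : 0 < Real.Gamma (a + b) / (Real.Gamma a * Real.Gamma b) := Gamma_frac_pos ha hb
  have hKapos : (0:ℝ) < max 1 ((2⁻¹:ℝ) ^ (a-1)) := lt_of_lt_of_le one_pos (le_max_left _ _)
  set qe : ℝ := 1/p with hqe
  have hqpos : 0 < qe := by positivity
  set m : ℝ := min b 1 with hm
  have hmpos : 0 < m := lt_min hb one_pos
  have hmb : m ≤ b := min_le_left _ _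
  have hMpos : (0:ℝ) < max b 1 := lt_of_lt_of_le one_pos (le_max_right _ _)
  set D : ℝ := Real.Gamma (a + b) / (Real.Gamma a * Real.Gamma b) * max 1 ((2⁻¹:ℝ) ^ (a-1)) / b
    with hD
  have hDpos : 0 < D := by positivity
  set c0 : ℝ := D * max b 1 * qe ^ (b - m) * (qe * (qe+1)) ^ m with hc0
  have hc0pos : 0 < c0 := by positivity
  set s : ℝ := b + m with hs
  have hspos : 0 < s := by positivity
  set c1 : ℝ := c0 * Real.Gamma (s + 1) with hc1
  have hc1pos : 0 < c1 := mul_pos hc0pos (Real.Gamma_pos_of_pos (by linarith))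
  have hβfin : betaM a b univ < ∞ := betaM_univ_lt_top a b ha hb
  set Mβ : ℝ := (betaM a b univ).toReal with hMβ
  have hMβnn : 0 ≤ Mβ := ENNReal.toReal_nonneg
  refine ⟨max c1 Mβ, le_trans hc1pos.le (le_max_left _ _), fun w hw => ?_⟩
  set μ := (betaM a b).prod expM with hμ
  set A := {q : ℝ × ℝ | q.1 > 1 - q.2 / (p * w)} with hA
  set Bs := {q : ℝ × ℝ | q.1 > (1 + q.2 / w) ^ (-(1 / p))} with hBs
  set G := Ioo (0:ℝ) 1 ×ˢ Ioi (0:ℝ) with hG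
  set S := (A \ Bs) ∩ G with hSdef
  have hAmeas : MeasurableSet A :=
    measurableSet_lt (measurable_const.sub ((measurable_snd.div_const _))) measurable_fst
  have hBmeas : MeasurableSet Bs :=
    measurableSet_lt ((measurable_const.add (measurable_snd.div_const _)).pow_const _)
      measurable_fst
  have hGmeas : MeasurableSet G := (measurableSet_Ioo).prod measurableSet_Ioi
  have hSmeas : MeasurableSet S := ((hAmeas.diff hBmeas).inter hGmeas)
  have hkey : ∀ z : ℝ, 0 < z → 1 - z / (p*w) ≤ (1 + z/w) ^ (-(1/p)) := by
    intro z hz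
    have hx : 0 ≤ z/w := by positivity
    have h1 := bern_neg hqpos hx
    have hrw : qe * (z/w) = z / (p*w) := by rw [hqe]; field_simp
    rw [hrw] at h1
    simpa [hqe] using h1
  have hμuniv : μ univ < ∞ := by
    rw [hμ, ← univ_prod_univ, Measure.prod_prod, expM_univ, mul_one]
    exact hβfin
  have hAfin : μ A ≠ ∞ := (lt_of_le_of_lt (measure_mono (subset_univ _)) hμuniv).ne
  have hBfin : μ Bs ≠ ∞ := (lt_of_le_of_lt (measure_mono (subset_univ _)) hμuniv).ne
  have hSfin : μ S ≠ ∞ := (lt_of_le_of_lt (measure_mono (subset_univ _)) hμuniv).ne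
  have hBA : μ Bs ≤ μ A := by
    have hsub : Bs ⊆ A ∪ (univ ×ˢ Iic (0:ℝ)) := by
      rintro ⟨x, z⟩ hxz
      rcases le_or_gt z 0 with hz | hz
      · exact Or.inr ⟨trivial, hz⟩
      · left
        show x > 1 - z / (p*w)
        exact lt_of_le_of_lt (hkey z hz) hxz
    calc μ Bs ≤ μ A + μ (univ ×ˢ Iic (0:ℝ)) :=
          le_trans (measure_mono hsub) (measure_union_le _ _)
      _ = μ A := by rw [hμ, Measure.prod_prod, expM_Iic, mul_zero, add_zero]
  have hGc : μ Gᶜ = 0 := by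
    rw [hG, Set.compl_prod_eq_union]
    refine le_antisymm (le_trans (measure_union_le _ _) ?_) zero_le
    rw [hμ, Measure.prod_prod, Measure.prod_prod, betaM_compl, zero_mul,
      compl_Ioi, expM_Iic, mul_zero, add_zero]
  have hAB : μ A ≤ μ Bs + μ S := by
    have hsub : A ⊆ (Bs ∪ S) ∪ Gᶜ := by
      intro x hx
      by_cases hg : x ∈ G
      · by_cases hbs : x ∈ Bs
        · exact Or.inl (Or.inl hbs)
        · exact Or.inl (Or.inr ⟨⟨hx, hbs⟩, hg⟩)
      · exact Or.inr hg
    calc μ A ≤ μ (Bs ∪ S) + μ Gᶜ := le_trans (measure_mono hsub) (measure_union_le _ _)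
      _ = μ (Bs ∪ S) := by rw [hGc, add_zero]
      _ ≤ μ Bs + μ S := measure_union_le _ _
  -- slice bound
  set hbound : ℝ → ℝ≥0∞ := fun z =>
    (Ioc (0:ℝ) (p*w/2)).indicator (fun z => ENNReal.ofReal (c0 * (z/w) ^ s)) z +
    (Ioi (p*w/2)).indicator (fun _ => betaM a b univ) z with hhbound
  have hhm : Measurable hbound := by
    refine Measurable.add ?_ ?_
    · exact (ENNReal.measurable_ofReal.comp
        (((measurable_id.div_const w).pow_const s).const_mul c0)).indicator measurableSet_Ioc
    · exact measurable_const.indicator measurableSet_Ioi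
  have hslice : ∀ z : ℝ, betaM a b ((fun y => (y, z)) ⁻¹' S) ≤ hbound z := by
    intro z
    rcases le_or_gt z 0 with hz | hz
    · have hemp : (fun y => (y, z)) ⁻¹' S = ∅ := by
        rw [eq_empty_iff_forall_notMem]
        intro y hy
        exact absurd hy.2.2 (by simpa using hz)
      rw [hemp]
      simp
    rcases le_or_gt z (p*w/2) with hz2 | hz2
    · -- main case
      have hwpos : 0 < p * w := by positivity
      have hxpos : 0 < z/w := by positivity
      set l : ℝ := 1 - z/(p*w) with hl
      set r : ℝ := (1 + z/w) ^ (-(1/p)) with hr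
      have hl2 : 2⁻¹ ≤ l := by
        rw [hl]
        have : z / (p*w) ≤ 2⁻¹ := by
          rw [div_le_iff₀ hwpos]; linarith
        linarith
      have hlr : l ≤ r := hkey z hz
      have hr1 : r ≤ 1 := by
        rw [hr]
        exact Real.rpow_le_one_of_one_le_of_nonpos
          (le_add_of_nonneg_right hxpos.le) (neg_nonpos.2 (by positivity))
      have hsub : (fun y => (y, z)) ⁻¹' S ⊆ Ioc l r := by
        intro y hy
        refine mem_Ioc.2 ⟨hy.1.1, not_lt.1 (fun hc => hy.1.2 hc)⟩
      set u : ℝ := qe * (z/w) with hu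
      set v : ℝ := 1 - r with hv
      have hul : 1 - l = u := by
        rw [hl, hu, hqe, _root_.sub_sub_cancel]; field_simp
      have hv0 : 0 ≤ v := by rw [hv]; linarith
      have hvu : v ≤ u := by rw [hv, ← hul]; linarith
      have hquad : u - v ≤ qe*(qe+1)*(z/w)^(2:ℝ) := by
        have h2 := bern_quad hqpos hxpos.le
        have hru : r = (1+z/w)^(-qe) := by rw [hr, hqe]
        rw [Real.rpow_two]
        rw [hu, hv, hru]
        linarith [h2]
      have hfinal : u^b - v^b ≤ max b 1 * qe^(b-m) * (qe*(qe+1))^m * (z/w)^s := by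
        have hx2m : ((z/w)^(2:ℝ))^m = (z/w)^(2*m) := (Real.rpow_mul hxpos.le 2 m).symm
        have hxs : (z/w)^(b-m) * (z/w)^(2*m) = (z/w)^s := by
          rw [← Real.rpow_add hxpos, hs]; ring_nf
        calc u^b - v^b ≤ max b 1 * u^(b-m) * (u-v)^m := rpow_diff_bound hb hv0 hvu
          _ = max b 1 * (qe^(b-m) * (z/w)^(b-m)) * (u-v)^m := by
              rw [hu, Real.mul_rpow hqpos.le hxpos.le]
          _ ≤ max b 1 * (qe^(b-m) * (z/w)^(b-m)) *
              ((qe*(qe+1))^m * ((z/w)^(2:ℝ))^m) := by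
              refine mul_le_mul_of_nonneg_left ?_ (by positivity)
              calc (u-v)^m ≤ (qe*(qe+1)*(z/w)^(2:ℝ))^m :=
                    Real.rpow_le_rpow (sub_nonneg.2 hvu) hquad hmpos.le
                _ = (qe*(qe+1))^m * ((z/w)^(2:ℝ))^m :=
                    Real.mul_rpow (by positivity) (Real.rpow_nonneg hxpos.le _)
          _ = max b 1 * qe^(b-m) * (qe*(qe+1))^m * ((z/w)^(b-m) * (z/w)^(2*m)) := by
              rw [hx2m]; ring
          _ = max b 1 * qe^(b-m) * (qe*(qe+1))^m * (z/w)^s := by rw [hxs]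
      calc betaM a b ((fun y => (y, z)) ⁻¹' S) ≤ betaM a b (Ioc l r) := measure_mono hsub
        _ ≤ ENNReal.ofReal
            ((Real.Gamma (a + b) / (Real.Gamma a * Real.Gamma b)) * max 1 ((2⁻¹:ℝ) ^ (a-1)) / b *
              ((1-l) ^ b - (1-r) ^ b)) := betaM_Ioc_le a b ha hb hl2 hlr hr1
        _ ≤ ENNReal.ofReal (c0 * (z/w)^s) := by
            refine ENNReal.ofReal_le_ofReal ?_
            rw [← hD, hul, ← hv]
            calc D * (u^b - v^b)
                ≤ D * (max b 1 * qe^(b-m) * (qe*(qe+1))^m * (z/w)^s) :=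
                  mul_le_mul_of_nonneg_left hfinal hDpos.le
              _ = c0 * (z/w)^s := by rw [hc0]; ring
        _ ≤ hbound z := by
            simp only [hhbound]
            rw [indicator_of_mem (mem_Ioc.2 ⟨hz, hz2⟩)]
            exact self_le_add_right _ _
    · -- tail case
      refine (measure_mono (subset_univ _)).trans ?_
      simp only [hhbound]
      rw [indicator_of_notMem (fun hc => absurd hc.2 (not_le.2 hz2) : z ∉ Ioc (0:ℝ) (p*w/2)),
        indicator_of_mem (mem_Ioi.2 hz2), zero_add]
  -- integrate the slice bound
  set T1 : ℝ → ℝ≥0∞ := fun z =>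
    (Ioi (0:ℝ)).indicator (fun z => ENNReal.ofReal (Real.exp (-z) * (c0 * (z/w) ^ s))) z with hT1
  set T2 : ℝ → ℝ≥0∞ := fun z =>
    (Ioi (p*w/2)).indicator (fun z => ENNReal.ofReal (Real.exp (-z))) z * betaM a b univ with hT2
  have hT1m : Measurable fun z => ENNReal.ofReal (Real.exp (-z) * (c0 * (z/w) ^ s)) :=
    ENNReal.measurable_ofReal.comp
      ((measurable_id.neg.exp).mul (((measurable_id.div_const w).pow_const s).const_mul c0))
  have hT1meas : Measurable T1 := hT1m.indicator measurableSet_Ioi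
  have hT2meas : Measurable T2 :=
    ((ENNReal.measurable_ofReal.comp (measurable_id.neg.exp)).indicator
      measurableSet_Ioi).mul_const _
  have hpt : ∀ z : ℝ, (gden * hbound) z ≤ T1 z + T2 z := by
    intro z
    simp only [Pi.mul_apply]
    by_cases hz : 0 < z
    · have hg : gden z = ENNReal.ofReal (Real.exp (-z)) := by rw [gden, if_pos hz]
      rw [hg]
      simp only [hhbound, hT1, hT2]
      rw [mul_add]
      refine add_le_add ?_ ?_
      · by_cases hzz : z ∈ Ioc (0:ℝ) (p*w/2)
        · rw [indicator_of_mem hzz, ← ENNReal.ofReal_mul (Real.exp_nonneg _)]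
          rw [indicator_of_mem (mem_Ioi.2 hz)]
        · rw [indicator_of_notMem hzz, mul_zero]
          exact zero_le
      · by_cases hzz : z ∈ Ioi (p*w/2)
        · rw [indicator_of_mem hzz, indicator_of_mem hzz]
        · rw [indicator_of_notMem hzz, mul_zero]
          exact zero_le
    · have hg : gden z = 0 := by rw [gden, if_neg hz, ENNReal.ofReal_zero]
      rw [hg, zero_mul]
      exact zero_le
  have hI1 : ∫⁻ z, T1 z ≤ ENNReal.ofReal (c1 / w ^ s) := by
    simp only [hT1]
    rw [lintegral_indicator measurableSet_Ioi]
    have hcong : ∀ z ∈ Ioi (0:ℝ), ENNReal.ofReal (Real.exp (-z) * (c0 * (z/w) ^ s)) =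
        ENNReal.ofReal (c0 / w ^ s) * ENNReal.ofReal (Real.exp (-z) * z ^ (s + 1 - 1)) := by
      intro z hz
      rw [← ENNReal.ofReal_mul (by positivity)]
      congr 1
      rw [add_sub_cancel_right, Real.div_rpow (le_of_lt hz) hw.le]
      ring
    rw [setLIntegral_congr_fun measurableSet_Ioi hcong]
    rw [lintegral_const_mul _ (show Measurable fun z : ℝ =>
        ENNReal.ofReal (Real.exp (-z) * z ^ (s + 1 - 1)) from
      ENNReal.measurable_ofReal.comp
        ((measurable_id.neg.exp).mul (measurable_id.pow_const _)))]
    have hGam : ∫⁻ z in Ioi (0:ℝ), ENNReal.ofReal (Real.exp (-z) * z ^ (s + 1 - 1)) =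
        ENNReal.ofReal (Real.Gamma (s+1)) := by
      rw [← ofReal_integral_eq_lintegral_ofReal (Real.GammaIntegral_convergent (by linarith))
        ((ae_restrict_iff' measurableSet_Ioi).2 (ae_of_all _ fun z hz =>
          mul_nonneg (Real.exp_nonneg _) (Real.rpow_nonneg (le_of_lt hz) _))),
        ← Real.Gamma_eq_integral (by linarith)]
    rw [hGam, ← ENNReal.ofReal_mul (by positivity)]
    refine ENNReal.ofReal_le_ofReal ?_
    rw [hc1]
    exact le_of_eq (by ring)
  have hI2 : ∫⁻ z, T2 z = ENNReal.ofReal (Real.exp (-(p*w/2))) * betaM a b univ := by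
    simp only [hT2]
    rw [lintegral_mul_const _ (show Measurable fun z : ℝ =>
        (Ioi (p*w/2)).indicator (fun z => ENNReal.ofReal (Real.exp (-z))) z from
      (ENNReal.measurable_ofReal.comp
        (measurable_id.neg.exp)).indicator measurableSet_Ioi)]
    rw [lintegral_indicator measurableSet_Ioi, expM_tail]
  have hμS : μ S ≤ ENNReal.ofReal (c1 / w ^ s) +
      ENNReal.ofReal (Real.exp (-(p*w/2))) * betaM a b univ := by
    rw [hμ, Measure.prod_apply_symm hSmeas]
    calc ∫⁻ z, betaM a b ((fun y => (y, z)) ⁻¹' S) ∂expM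
        ≤ ∫⁻ z, hbound z ∂expM := lintegral_mono hslice
      _ = ∫⁻ z, (gden * hbound) z ∂volume := by
          rw [expM_eq]
          exact lintegral_withDensity_eq_lintegral_mul volume meas_gden hhm
      _ ≤ ∫⁻ z, (T1 z + T2 z) ∂volume := lintegral_mono hpt
      _ = (∫⁻ z, T1 z) + ∫⁻ z, T2 z := lintegral_add_left hT1meas _
      _ ≤ ENNReal.ofReal (c1 / w ^ s) +
          ENNReal.ofReal (Real.exp (-(p*w/2))) * betaM a b univ := by
          rw [hI2]
          exact add_le_add_left hI1 _
  -- pass to real numbers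
  have hdiff : |(μ A).toReal - (μ Bs).toReal| ≤ (μ S).toReal := by
    have h1 : (μ Bs).toReal ≤ (μ A).toReal := ENNReal.toReal_mono hAfin hBA
    have h2 : (μ A).toReal ≤ (μ Bs).toReal + (μ S).toReal := by
      have h3 := ENNReal.toReal_mono (ENNReal.add_ne_top.2 ⟨hBfin, hSfin⟩) hAB
      rwa [ENNReal.toReal_add hBfin hSfin] at h3
    rw [abs_of_nonneg (by linarith)]
    linarith
  have hSR : (μ S).toReal ≤ c1 / w ^ s + Real.exp (-(p*w/2)) * Mβ := by
    have hne : ENNReal.ofReal (c1 / w ^ s) +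
        ENNReal.ofReal (Real.exp (-(p*w/2))) * betaM a b univ ≠ ∞ :=
      ENNReal.add_ne_top.2 ⟨ENNReal.ofReal_ne_top,
        ENNReal.mul_ne_top ENNReal.ofReal_ne_top hβfin.ne⟩
    have h4 := ENNReal.toReal_mono hne hμS
    rwa [ENNReal.toReal_add ENNReal.ofReal_ne_top
        (ENNReal.mul_ne_top ENNReal.ofReal_ne_top hβfin.ne),
      ENNReal.toReal_ofReal (by positivity), ENNReal.toReal_mul,
      ENNReal.toReal_ofReal (Real.exp_nonneg _)] at h4
  refine (hdiff.trans hSR).trans ?_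
  have he1 : c1 / w ^ s ≤ max c1 Mβ * w ^ (-(b + m)) := by
    rw [← hs, Real.rpow_neg hw.le, div_eq_mul_inv]
    exact mul_le_mul_of_nonneg_right (le_max_left _ _) (by positivity)
  have he2 : Real.exp (-(p*w/2)) * Mβ ≤ max c1 Mβ * Real.exp (-(p/2) * w) := by
    rw [show -(p*w/2) = -(p/2)*w by ring, mul_comm]
    exact mul_le_mul_of_nonneg_right (le_max_right _ _) (Real.exp_nonneg _)
  linarith

theorem beta_exp_prob_diff_littleO (a b p : ℝ) (ha : 0 < a) (hb : 0 < b) (hp : 0 < p) :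
    (fun w : ℝ =>
        |(((betaM a b).prod expM) {q : ℝ × ℝ | q.1 > 1 - q.2 / (p * w)}).toReal -
          (((betaM a b).prod expM) {q : ℝ × ℝ | q.1 > (1 + q.2 / w) ^ (-(1 / p))}).toReal|)
      =o[atTop] fun w : ℝ => w ^ (-b) := by
  obtain ⟨c, hc, hbd⟩ := main_bound a b p ha hb hp
  have h1 : (fun w : ℝ => c * w ^ (-(b + min b 1)) + c * Real.exp (-(p/2) * w))
      =o[atTop] fun w : ℝ => w ^ (-b) := by
    refine IsLittleO.add ?_ ?_
    · refine IsLittleO.const_mul_left ?_ c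
      have hsmall : (fun w : ℝ => w ^ (-(min b 1))) =o[atTop] (fun _ : ℝ => (1:ℝ)) :=
        (isLittleO_one_iff ℝ).2 (tendsto_rpow_neg_atTop (lt_min hb one_pos))
      have hmul : (fun w : ℝ => w ^ (-(min b 1)) * w ^ (-b)) =o[atTop]
          fun w : ℝ => 1 * w ^ (-b) := hsmall.mul_isBigO (isBigO_refl _ _)
      have heq : (fun w : ℝ => w ^ (-(b + min b 1))) =ᶠ[atTop]
          fun w : ℝ => w ^ (-(min b 1)) * w ^ (-b) := by
        filter_upwards [eventually_gt_atTop 0] with w hw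
        rw [← Real.rpow_add hw]
        congr 1
        ring
      have heq2 : (fun w : ℝ => 1 * w ^ (-b)) =ᶠ[atTop] fun w : ℝ => w ^ (-b) := by
        filter_upwards with w
        rw [one_mul]
      exact (hmul.congr' heq.symm heq2)
    · exact IsLittleO.const_mul_left
        (isLittleO_exp_neg_mul_rpow_atTop (by positivity : (0:ℝ) < p/2) (-b)) c
  refine IsBigO.trans_isLittleO ?_ h1
  refine IsBigO.of_bound 1 ?_
  filter_upwards [eventually_gt_atTop 0] with w hw
  rw [one_mul, Real.norm_eq_abs, Real.norm_eq_abs, abs_abs]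
  exact (hbd w hw).trans (le_abs_self _)
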